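/- Let (G,B) be a connected finite simple graph with nonempty boundary B such that no edge joins two boundary vertices (E(B,B)=∅), equipped with the unit weight (m ≡ 1, w ≡ 1). Then the second Steklov eigenvalue satisfies σ₂ ≥ |B| / ((|B|−1)² · d_B), where d_B = max{d(x,y) : x,y ∈ B} is the maximal graph distance between boundary vertices. -/

import Mathlib

open Finset

variable {V : Type*}

/-- The Dirichlet energy `⟨du,du⟩ = ∑_{{x,y}∈E} (u y - u x)^2 w_{xy}` of a function `u`,
where the edge weight `w` is symmetric and vanishes on non-adjacent pairs. -/
noncomputable def energy [Fintype V] (w : V → V → ℝ) (u : V → ℝ) : ℝ :=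
  (1 / 2) * ∑ x, ∑ y, (u y - u x) ^ 2 * w x y

/-- The Dirichlet pairing `⟨du,dv⟩ = ∑_{{x,y}∈E} (u y - u x)(v y - v x) w_{xy}`. -/
noncomputable def dirPairing [Fintype V] (w : V → V → ℝ) (u v : V → ℝ) : ℝ :=
  (1 / 2) * ∑ x, ∑ y, (u y - u x) * (v y - v x) * w x y

/-- The weighted graph Laplacian `Δu(x) = (1/m_x) ∑_y (u y - u x) w_{xy}`. -/
noncomputable def glap [Fintype V] (m : V → ℝ) (w : V → V → ℝ) (u : V → ℝ) (x : V) : ℝ :=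
  (1 / m x) * ∑ y, (u y - u x) * w x y

/-- `d_B`, the maximal graph distance between two boundary vertices. -/
noncomputable def boundaryDiam (G : SimpleGraph V) (B : Finset V) : ℕ :=
  (B ×ˢ B).sup fun p => G.dist p.1 p.2

/-- `w₀`, the minimal edge weight. -/
noncomputable def minEdgeWeight (G : SimpleGraph V) (w : V → V → ℝ) : ℝ :=
  sInf {r : ℝ | ∃ x y, G.Adj x y ∧ w x y = r}

/-- `m₀`, the minimal vertex measure on the boundary. -/
noncomputable def minBoundaryMeasure (B : Finset V) (m : V → ℝ) : ℝ :=
  sInf {r : ℝ | ∃ x ∈ B, m x = r}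

/-- The second Steklov eigenvalue `σ₂`, via its variational characterization: the infimum of
the Rayleigh quotients `E(u)/⟨u,u⟩_B` over functions `u` on `V` whose boundary values are
nonzero and have weighted mean zero.  (Since the harmonic extension minimizes the Dirichlet
energy among all extensions of given boundary data, this agrees with the second eigenvalue of
the Steklov operator.) -/
noncomputable def sigma2 [Fintype V] (B : Finset V) (m : V → ℝ) (w : V → V → ℝ) : ℝ :=
  sInf {r : ℝ | ∃ u : V → ℝ, (∃ x ∈ B, u x ≠ 0) ∧ (∑ x ∈ B, u x * m x = 0) ∧
    r = energy w u / ∑ x ∈ B, (u x) ^ 2 * m x}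

section Aux
variable [Fintype V] {G : SimpleGraph V} {w : V → V → ℝ}

private lemma telescope_walk (u : V → ℝ) {x y : V} (p : G.Walk x y) :
    u y - u x = (p.darts.map fun d => u d.snd - u d.fst).sum := by
  induction p with
  | nil => simp
  | cons h p ih =>
    rw [SimpleGraph.Walk.darts_cons, List.map_cons, List.sum_cons, ← ih]
    ring

private lemma energy_term_nonneg (hw1 : ∀ x y, G.Adj x y → w x y = 1)
    (hw0 : ∀ x y, ¬ G.Adj x y → w x y = 0) (u : V → ℝ) (x y : V) :
    0 ≤ (u y - u x) ^ 2 * w x y := by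
  by_cases h : G.Adj x y
  · rw [hw1 x y h]; positivity
  · rw [hw0 x y h]; simp

private lemma energy_nonneg (hw1 : ∀ x y, G.Adj x y → w x y = 1)
    (hw0 : ∀ x y, ¬ G.Adj x y → w x y = 0) (u : V → ℝ) : 0 ≤ energy w u := by
  unfold energy
  have : 0 ≤ ∑ x, ∑ y, (u y - u x) ^ 2 * w x y :=
    Finset.sum_nonneg fun x _ => Finset.sum_nonneg fun y _ =>
      energy_term_nonneg hw1 hw0 u x y
  linarith

private lemma trail_sum_le_energy [DecidableEq V]
    (hw1 : ∀ x y, G.Adj x y → w x y = 1) (hw0 : ∀ x y, ¬ G.Adj x y → w x y = 0)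
    (u : V → ℝ) {x y : V} (q : G.Walk x y) (hq : q.IsTrail) :
    ∑ d ∈ q.darts.toFinset, (u d.snd - u d.fst) ^ 2 ≤ energy w u := by
  have hed : (q.darts.map SimpleGraph.Dart.edge).Nodup := hq.edges_nodup
  have hnd : q.darts.Nodup := hed.of_map _
  set g : V × V → ℝ := fun p => (u p.2 - u p.1) ^ 2 * w p.1 p.2 with hg
  have hg0 : ∀ p : V × V, 0 ≤ g p := fun p => energy_term_nonneg hw1 hw0 u p.1 p.2
  have hgsym : ∀ p : V × V, g p.swap = g p := by
    intro p
    have hw : w p.2 p.1 = w p.1 p.2 := by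
      by_cases h : G.Adj p.1 p.2
      · rw [hw1 _ _ h, hw1 _ _ h.symm]
      · rw [hw0 _ _ h, hw0 _ _ fun h' => h h'.symm]
    simp only [hg, Prod.swap, hw]
    ring
  set T : Finset (V × V) := q.darts.toFinset.image SimpleGraph.Dart.toProd with hT
  have hsumT : ∑ d ∈ q.darts.toFinset, (u d.snd - u d.fst) ^ 2 = ∑ p ∈ T, g p := by
    rw [hT, Finset.sum_image (fun a _ b _ h => SimpleGraph.Dart.toProd_injective h)]
    refine Finset.sum_congr rfl fun d hd => ?_
    have : w d.fst d.snd = 1 := hw1 _ _ d.adj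
    simp only [hg]
    rw [show d.toProd.1 = d.fst from rfl, show d.toProd.2 = d.snd from rfl, this, mul_one]
  set T' : Finset (V × V) := T.image Prod.swap with hT'
  have hsumT' : ∑ p ∈ T', g p = ∑ p ∈ T, g p := by
    rw [hT', Finset.sum_image (fun a _ b _ h => Prod.swap_injective h)]
    exact Finset.sum_congr rfl fun p _ => hgsym p
  have hdisj : Disjoint T T' := by
    rw [Finset.disjoint_left]
    rintro p hp hp'
    simp only [hT', hT, Finset.mem_image, List.mem_toFinset] at hp hp'
    obtain ⟨d, hd, hdp⟩ := hp
    obtain ⟨p₀, ⟨d', hd', hd'p₀⟩, hswap⟩ := hp'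
    have hedge : d.edge = d'.edge := by
      have h1 : d.toProd = p := hdp
      have h2 : d'.toProd = p.swap := by rw [hd'p₀, ← hswap, Prod.swap_swap]
      rw [SimpleGraph.Dart.edge, SimpleGraph.Dart.edge, h1, h2, Sym2.mk_prod_swap_eq]; rfl
    have : d = d' := List.inj_on_of_nodup_map hed hd hd' hedge
    have h1 : d.toProd = p := hdp
    have h2 : d.toProd = p.swap := by rw [this, hd'p₀, ← hswap]; exact (Prod.swap_swap _).symm
    have hpp : p = p.swap := h1 ▸ h2
    have : p.1 = p.2 := by
      have := congrArg Prod.fst hpp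
      simpa using this
    have hadj : G.Adj p.1 p.2 := by rw [← h1]; exact d.adj
    rw [this] at hadj
    exact G.irrefl hadj
  have hunion : ∑ p ∈ T ∪ T', g p = 2 * ∑ p ∈ T, g p := by
    rw [Finset.sum_union hdisj, hsumT']; ring
  have hle : ∑ p ∈ T ∪ T', g p ≤ ∑ p : V × V, g p :=
    Finset.sum_le_sum_of_subset_of_nonneg (Finset.subset_univ _)
      (fun p _ _ => hg0 p)
  have henergy : energy w u = (1 / 2) * ∑ p : V × V, g p := by
    rw [energy, Fintype.sum_prod_type]
  rw [hsumT, henergy]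
  rw [hunion] at hle
  linarith

private lemma pair_bound [DecidableEq V] (hG : G.Connected)
    (hw1 : ∀ x y, G.Adj x y → w x y = 1) (hw0 : ∀ x y, ¬ G.Adj x y → w x y = 0)
    (u : V → ℝ) {x y : V} (D : ℕ) (hD : G.dist x y ≤ D) :
    (u y - u x) ^ 2 ≤ (D : ℝ) * energy w u := by
  obtain ⟨p, hp⟩ := (hG.preconnected x y).exists_walk_length_eq_dist
  set q := p.bypass with hqdef
  have hq : q.IsTrail := (p.bypass_isPath).isTrail
  have hlen : q.length ≤ D := le_trans (SimpleGraph.Walk.length_bypass_le p) (hp ▸ hD)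
  have hnd : q.darts.Nodup := hq.edges_nodup.of_map _
  have htele : u y - u x = ∑ d ∈ q.darts.toFinset, (u d.snd - u d.fst) := by
    rw [telescope_walk u q, List.sum_toFinset _ hnd]
  rw [htele]
  calc (∑ d ∈ q.darts.toFinset, (u d.snd - u d.fst)) ^ 2
      ≤ (q.darts.toFinset.card : ℝ) * ∑ d ∈ q.darts.toFinset, (u d.snd - u d.fst) ^ 2 :=
        sq_sum_le_card_mul_sum_sq
    _ ≤ (D : ℝ) * energy w u := by
        apply mul_le_mul
        · exact_mod_cast (by rw [List.toFinset_card_of_nodup hnd,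
            SimpleGraph.Walk.length_darts]; exact hlen : q.darts.toFinset.card ≤ D)
        · exact trail_sum_le_energy hw1 hw0 u q hq
        · exact Finset.sum_nonneg fun d _ => sq_nonneg _
        · positivity

end Aux

/-- **Perrin's lower bound, unit weight** (Theorem 1.1, inequality).
For a connected finite graph with nonempty boundary `B`, no edge joining two boundary
vertices, equipped with the unit weight (`m ≡ 1`, `w ≡ 1` on edges), one has
`σ₂ ≥ |B| / ((|B|-1)² d_B)`. -/


theorem perrin_unit_weight_lower_bound [Fintype V]
    (G : SimpleGraph V) (hG : G.Connected)
    (B : Finset V) (hB : B.Nonempty)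
    (hBB : ∀ x ∈ B, ∀ y ∈ B, ¬ G.Adj x y)
    (m : V → ℝ) (w : V → V → ℝ)
    (hm : ∀ x, m x = 1)
    (hw1 : ∀ x y, G.Adj x y → w x y = 1)
    (hw0 : ∀ x y, ¬ G.Adj x y → w x y = 0) :
    sigma2 B m w ≥ (B.card : ℝ) / (((B.card : ℝ) - 1) ^ 2 * (boundaryDiam G B : ℝ)) := by
  classical
  by_cases hN1 : B.card ≤ 1
  · have hcard : B.card = 1 := le_antisymm hN1 (Finset.card_pos.mpr hB)
    have hempty : {r : ℝ | ∃ u : V → ℝ, (∃ x ∈ B, u x ≠ 0) ∧ (∑ x ∈ B, u x * m x = 0) ∧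
        r = energy w u / ∑ x ∈ B, (u x) ^ 2 * m x} = ∅ := by
      ext r
      simp only [Set.mem_setOf_eq, Set.mem_empty_iff_false, iff_false]
      rintro ⟨u, ⟨x, hx, hux⟩, hmean, -⟩
      obtain ⟨a, ha⟩ := Finset.card_eq_one.mp hcard
      rw [ha] at hmean hx
      simp only [Finset.sum_singleton, Finset.mem_singleton] at hmean hx
      subst hx
      rw [hm] at hmean
      exact hux (by linarith)
    unfold sigma2
    rw [hempty, Real.sInf_empty, hcard]
    norm_num
  · push_neg at hN1
    obtain ⟨x₁, hx₁, x₂, hx₂, hx12⟩ := Finset.one_lt_card.mp hN1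
    set N : ℝ := (B.card : ℝ) with hNdef
    set D : ℕ := boundaryDiam G B with hDdef
    have hN2 : (2:ℝ) ≤ N := by rw [hNdef]; exact_mod_cast hN1
    have hdistle : ∀ a ∈ B, ∀ b ∈ B, G.dist a b ≤ D := fun a ha b hb =>
      Finset.le_sup (f := fun p => G.dist p.1 p.2) (b := (a, b)) (Finset.mem_product.mpr ⟨ha, hb⟩)
    have hD1 : 1 ≤ D := le_trans (hG.pos_dist_of_ne hx12) (hdistle x₁ hx₁ x₂ hx₂)
    have hDr : (1:ℝ) ≤ (D:ℝ) := by exact_mod_cast hD1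
    have key : ∀ u : V → ℝ, (∃ x ∈ B, u x ≠ 0) → (∑ x ∈ B, u x * m x = 0) →
        N / ((N - 1) ^ 2 * (D:ℝ)) ≤ energy w u / ∑ x ∈ B, (u x) ^ 2 * m x := by
      intro u hnz hmean
      have hE0 : 0 ≤ energy w u := energy_nonneg hw1 hw0 u
      set E := energy w u with hE
      set Q := ∑ x ∈ B, (u x) ^ 2 with hQ
      have hQm : ∑ x ∈ B, (u x) ^ 2 * m x = Q := by simp [hQ, hm]
      have hS : ∑ x ∈ B, u x = 0 := by
        have : ∀ x ∈ B, u x * m x = u x := fun x _ => by rw [hm, mul_one]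
        rwa [Finset.sum_congr rfl this] at hmean
      obtain ⟨x₀, hx₀, hux₀⟩ := hnz
      have hQpos : 0 < Q := lt_of_lt_of_le (by positivity)
        (Finset.single_le_sum (f := fun x => (u x)^2) (fun i _ => sq_nonneg _) hx₀)
      have inner : ∀ x ∈ B, ∑ y ∈ B, (u y - u x)^2 = Q + N * (u x)^2 := by
        intro x hx
        have h1 : ∀ y ∈ B, (u y - u x)^2 = ((u y)^2 - (2 * u x) * u y) + (u x)^2 :=
          fun y _ => by ring
        rw [Finset.sum_congr rfl h1, Finset.sum_add_distrib, Finset.sum_sub_distrib,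
          ← Finset.mul_sum, hS, Finset.sum_const, nsmul_eq_mul, ← hQ]
        ring
      have expand : ∑ x ∈ B, ∑ y ∈ B, (u y - u x)^2 = 2 * N * Q := by
        rw [Finset.sum_congr rfl inner, Finset.sum_add_distrib, Finset.sum_const,
          nsmul_eq_mul, ← Finset.mul_sum, ← hQ]
        ring
      have pairb : ∀ a ∈ B, ∀ b ∈ B, (u b - u a)^2 ≤ (D:ℝ) * E :=
        fun a ha b hb => pair_bound hG hw1 hw0 u D (hdistle a ha b hb)
      have h1 : ∀ x ∈ B, ∑ y ∈ B, (u y - u x)^2 ≤ (N - 1) * ((D:ℝ) * E) := by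
        intro x hx
        have hsplit : ∑ y ∈ B, (u y - u x)^2 = ∑ y ∈ B.erase x, (u y - u x)^2 := by
          rw [← Finset.add_sum_erase _ _ hx]; simp
        rw [hsplit]
        calc ∑ y ∈ B.erase x, (u y - u x)^2
            ≤ (B.erase x).card • ((D:ℝ) * E) :=
              Finset.sum_le_card_nsmul _ _ _
                (fun y hy => pairb x hx y (Finset.mem_of_mem_erase hy))
          _ = ((B.erase x).card : ℝ) * ((D:ℝ)*E) := nsmul_eq_mul _ _
          _ = (N - 1) * ((D:ℝ)*E) := by
              rw [Finset.card_erase_of_mem hx,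
                Nat.cast_sub (Finset.card_pos.mpr hB), Nat.cast_one, hNdef]
      have bound : ∑ x ∈ B, ∑ y ∈ B, (u y - u x)^2 ≤ N * ((N - 1) * ((D:ℝ) * E)) := by
        calc ∑ x ∈ B, ∑ y ∈ B, (u y - u x)^2 ≤ ∑ _x ∈ B, (N-1) * ((D:ℝ)*E) :=
              Finset.sum_le_sum h1
          _ = N * ((N-1) * ((D:ℝ)*E)) := by rw [Finset.sum_const, nsmul_eq_mul, hNdef]
      have hmain : 2 * N * Q ≤ N * ((N - 1) * ((D:ℝ) * E)) := expand ▸ bound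
      rw [hQm, div_le_div_iff₀ (by nlinarith) hQpos]
      have hNpos : (0:ℝ) < N := by linarith
      have h2Q : 2 * Q ≤ (N - 1) * ((D:ℝ) * E) := by nlinarith
      nlinarith [mul_le_mul_of_nonneg_left h2Q (by linarith : (0:ℝ) ≤ N - 1)]
    rw [ge_iff_le]
    unfold sigma2
    apply le_csInf
    · refine ⟨_, (fun v => (if v = x₁ then (1:ℝ) else 0) - if v = x₂ then 1 else 0),
        ⟨x₁, hx₁, ?_⟩, ?_, rfl⟩
      · simp [hx12]
      · simp [hm, Finset.sum_sub_distrib, Finset.sum_ite_eq' B, hx₁, hx₂]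
    · rintro b ⟨u, hnz, hmean, rfl⟩
      exact key u hnz hmean
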